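/- arXiv:2201.09192 — 4 statements merged into one kernel-verified Lean document; each statement's English description precedes it below -/
import Mathlib

section
/- For positive reals c, c' with c ≥ a·c' for a constant a ∈ (0, 1/2], the inequality K(c, c') ≥ (3a/5)·Q(c, c') holds, where K(c, c') = c'/c - 1 - log(c'/c) and Q(c, c') = (c'/c - 1)². -/
open Real Set

private lemma key_deriv (lam x : ℝ) (hx : 0 < x) :
    HasDerivAt (fun t : ℝ => t - 1 - Real.log t - lam * (t - 1) ^ 2)
      (1 - x⁻¹ - lam * (2 * (x - 1))) x := by
  have hl := Real.hasDerivAt_log (ne_of_gt hx)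
  have hp : HasDerivAt (fun t : ℝ => (t - 1) ^ 2) (2 * (x - 1)) x := by
    have := ((hasDerivAt_id x).sub_const 1).pow 2
    norm_num at this
    exact this
  exact (((hasDerivAt_id x).sub_const 1).sub hl).sub (hp.const_mul lam)

private lemma fcont (lam : ℝ) (s : Set ℝ) (hs : ∀ x ∈ s, (0:ℝ) < x) :
    ContinuousOn (fun t : ℝ => t - 1 - Real.log t - lam * (t - 1) ^ 2) s :=
  fun x hx => ((key_deriv lam x (hs x hx)).differentiableAt).continuousAt.continuousWithinAt

private lemma lemA (lam : ℝ) (hlam : lam ≤ 1/2) (t : ℝ) (ht0 : 0 < t) (ht1 : t ≤ 1) :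
    lam * (t - 1) ^ 2 ≤ t - 1 - Real.log t := by
  have hanti : AntitoneOn (fun t : ℝ => t - 1 - Real.log t - lam * (t - 1) ^ 2) (Ioc 0 1) := by
    apply antitoneOn_of_deriv_nonpos (convex_Ioc 0 1)
    · exact fcont lam _ (fun x hx => hx.1)
    · intro x hx
      rw [interior_Ioc] at hx
      exact ((key_deriv lam x hx.1).differentiableAt).differentiableWithinAt
    · intro x hx
      rw [interior_Ioc] at hx
      obtain ⟨hx0, hx1⟩ := hx
      rw [(key_deriv lam x hx0).deriv]
      have heq : 1 - x⁻¹ - lam * (2 * (x - 1)) = (x - 1) * (1 - 2 * lam * x) / x := by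
        field_simp
      rw [heq]
      apply div_nonpos_of_nonpos_of_nonneg _ hx0.le
      apply mul_nonpos_of_nonpos_of_nonneg (by linarith)
      nlinarith
  have := hanti (mem_Ioc.2 ⟨ht0, ht1⟩) (mem_Ioc.2 ⟨zero_lt_one, le_refl 1⟩) ht1
  simp [Real.log_one] at this
  linarith

private lemma lemB (lam : ℝ) (hl0 : 0 < lam) (hlam : lam ≤ 1/2) (t : ℝ) (ht1 : 1 ≤ t)
    (ht : t ≤ 1 / (2 * lam)) :
    lam * (t - 1) ^ 2 ≤ t - 1 - Real.log t := by
  have hmono : MonotoneOn (fun t : ℝ => t - 1 - Real.log t - lam * (t - 1) ^ 2)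
      (Icc 1 (1 / (2 * lam))) := by
    apply monotoneOn_of_deriv_nonneg (convex_Icc _ _)
    · exact fcont lam _ (fun x hx => lt_of_lt_of_le zero_lt_one hx.1)
    · intro x hx
      rw [interior_Icc] at hx
      exact ((key_deriv lam x (lt_trans zero_lt_one hx.1)).differentiableAt).differentiableWithinAt
    · intro x hx
      rw [interior_Icc] at hx
      obtain ⟨hx1, hx2⟩ := hx
      have hx0 : (0:ℝ) < x := lt_trans zero_lt_one hx1
      rw [(key_deriv lam x hx0).deriv]
      have heq : 1 - x⁻¹ - lam * (2 * (x - 1)) = (x - 1) * (1 - 2 * lam * x) / x := by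
        field_simp
      rw [heq]
      apply div_nonneg _ hx0.le
      apply mul_nonneg (by linarith)
      have : 2 * lam * x < 1 := by
        rw [lt_div_iff₀ (by positivity)] at hx2
        nlinarith
      linarith
  have := hmono (mem_Icc.2 ⟨le_refl 1, by
      rw [le_div_iff₀ (by positivity)]; linarith⟩) (mem_Icc.2 ⟨ht1, ht⟩) ht1
  simp [Real.log_one] at this
  linarith

private lemma lemC (lam T : ℝ) (hl0 : 0 < lam) (hlam : lam ≤ 1/2) (t : ℝ)
    (ht1 : 1 / (2 * lam) ≤ t) (ht : t ≤ T) :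
    T - 1 - Real.log T - lam * (T - 1) ^ 2 ≤ t - 1 - Real.log t - lam * (t - 1) ^ 2 := by
  have hone : (1:ℝ) ≤ 1 / (2 * lam) := by
    rw [le_div_iff₀ (by positivity)]; linarith
  have hanti : AntitoneOn (fun t : ℝ => t - 1 - Real.log t - lam * (t - 1) ^ 2)
      (Icc (1 / (2 * lam)) T) := by
    apply antitoneOn_of_deriv_nonpos (convex_Icc _ _)
    · exact fcont lam _ (fun x hx => lt_of_lt_of_le zero_lt_one (le_trans hone hx.1))
    · intro x hx
      rw [interior_Icc] at hx
      have hx0 : (0:ℝ) < x := lt_of_lt_of_le zero_lt_one (le_trans hone hx.1.le)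
      exact ((key_deriv lam x hx0).differentiableAt).differentiableWithinAt
    · intro x hx
      rw [interior_Icc] at hx
      obtain ⟨hx1, hx2⟩ := hx
      have hx0 : (0:ℝ) < x := lt_of_lt_of_le zero_lt_one (le_trans hone hx1.le)
      rw [(key_deriv lam x hx0).deriv]
      have heq : 1 - x⁻¹ - lam * (2 * (x - 1)) = (x - 1) * (1 - 2 * lam * x) / x := by
        field_simp
      rw [heq]
      apply div_nonpos_of_nonpos_of_nonneg _ hx0.le
      apply mul_nonpos_of_nonneg_of_nonpos
      · have := le_trans hone hx1.le; linarith
      · have : 1 < 2 * lam * x := by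
          rw [div_lt_iff₀ (by positivity)] at hx1
          nlinarith
        linarith
  exact hanti (mem_Icc.2 ⟨ht1, ht⟩) (mem_Icc.2 ⟨le_trans ht1 ht, le_refl T⟩) ht

private lemma gderiv (x : ℝ) (hx : 0 < x) :
    HasDerivAt (fun y : ℝ => 2/5 * y⁻¹ + 1/5 + Real.log y - 3/5 * y)
      (2/5 * (-(x^2)⁻¹) + x⁻¹ - 3/5) x := by
  have h1 := (hasDerivAt_inv (ne_of_gt hx)).const_mul (2/5 : ℝ)
  have h2 := Real.hasDerivAt_log (ne_of_gt hx)
  have h3 := (hasDerivAt_id x).const_mul (3/5 : ℝ)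
  have := ((h1.add_const (1/5)).add h2).sub h3
  exact this.congr_deriv (by ring)

private lemma lemD (a : ℝ) (ha0 : 0 < a) (ha : a ≤ 1/2) :
    0 ≤ 2/5 * a⁻¹ + 1/5 + Real.log a - 3/5 * a := by
  have hanti : AntitoneOn (fun y : ℝ => 2/5 * y⁻¹ + 1/5 + Real.log y - 3/5 * y) (Ioc 0 (1/2)) := by
    apply antitoneOn_of_deriv_nonpos (convex_Ioc _ _)
    · intro x hx
      exact ((gderiv x hx.1).differentiableAt).continuousAt.continuousWithinAt
    · intro x hx
      rw [interior_Ioc] at hx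
      exact ((gderiv x hx.1).differentiableAt).differentiableWithinAt
    · intro x hx
      rw [interior_Ioc] at hx
      obtain ⟨hx0, hx2⟩ := hx
      rw [(gderiv x hx0).deriv]
      have heq : 2/5 * (-(x^2)⁻¹) + x⁻¹ - 3/5 = -((3*x - 2) * (x - 1)) / (5 * x^2) := by
        field_simp; ring
      rw [heq]
      apply div_nonpos_of_nonpos_of_nonneg _ (by positivity)
      nlinarith
  have h := hanti (mem_Ioc.2 ⟨ha0, ha⟩) (mem_Ioc.2 ⟨by norm_num, le_refl _⟩) ha
  have hlog2 : Real.log 2 < 0.6931471808 := Real.log_two_lt_d9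
  simp only [one_div, Real.log_inv] at h
  norm_num at h ⊢
  linarith

/-- For a ∈ (0,1/2] and c ≥ a·c', K(c,c') ≥ (3a/5)·Q(c,c'). -/
theorem stmt_1 (a c c' : ℝ) (ha0 : 0 < a) (ha : a ≤ 1 / 2)
    (hc : 0 < c) (hc' : 0 < c') (hca : a * c' ≤ c) :
    3 * a / 5 * (c' / c - 1) ^ 2 ≤ c' / c - 1 - Real.log (c' / c) := by
  set t := c' / c with htdef
  have ht0 : 0 < t := div_pos hc' hc
  have ht : t ≤ 1 / a := by
    rw [htdef, div_le_div_iff₀ hc ha0]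
    linarith [mul_comm a c']
  set lam := 3 * a / 5 with hlamdef
  have hl0 : 0 < lam := by positivity
  have hlam : lam ≤ 1/2 := by rw [hlamdef]; linarith
  rcases le_or_gt t 1 with h1 | h1
  · exact lemA lam hlam t ht0 h1
  · rcases le_or_gt t (1 / (2 * lam)) with h2 | h2
    · exact lemB lam hl0 hlam t h1.le h2
    · have hC := lemC lam (1/a) hl0 hlam t h2.le ht
      have hfT : 0 ≤ 1/a - 1 - Real.log (1/a) - lam * (1/a - 1) ^ 2 := by
        have hD := lemD a ha0 ha
        have hlog : Real.log (1/a) = -Real.log a := by rw [one_div, Real.log_inv]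
        rw [hlog]
        have heq : 1/a - 1 + Real.log a - lam * (1/a - 1) ^ 2
            = 2/5 * a⁻¹ + 1/5 + Real.log a - 3/5 * a := by
          rw [hlamdef]; field_simp; ring
        linarith [heq ▸ hD]
      linarith
end

section
/- Let Σ and Σ̃ be symmetric positive semi-definite bilinear forms on (p+1)×m matrices of the block form ⟨b, Σ b⟩ = Σ_{j₁,j₂} b_{j₁·}ᵀ Σ_{j₁j₂} b_{j₂·}, where each Σ_{j₁j₂} is an m×m matrix. Suppose (i) the compatibility condition ν²(Σ_{j∈S} ‖b_{j·}‖₂)² ≤ |S|·⟨b, Σ b⟩ holds for all b with Σ_{j∉S} ‖b_{j·}‖₂ ≤ ξ·Σ_{j∈S} ‖b_{j·}‖₂, (ii) sup_{j₁,j₂} ‖Σ̃_{j₁j₂} - Σ_{j₁j₂}‖_op ≤ λ, and (iii) (1+ξ)²ν^{-2}|S|λ ≤ η < 1. Then for all such b, (1-η)ν²(Σ_{j∈S} ‖b_{j·}‖₂)² ≤ |S|·⟨b, Σ̃ b⟩. -/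
lemma quad_bound_aux (m : ℕ) (A : Matrix (Fin m) (Fin m) ℝ) (x y : Fin m → ℝ) :
    |∑ k, ∑ l, x k * A k l * y l| ≤
      ‖Matrix.toEuclideanCLM (𝕜 := ℝ) A‖ * Real.sqrt (∑ k, x k ^ 2) * Real.sqrt (∑ k, y k ^ 2) := by
  set x' : EuclideanSpace ℝ (Fin m) := (WithLp.equiv 2 _).symm x
  set y' : EuclideanSpace ℝ (Fin m) := (WithLp.equiv 2 _).symm y
  have h1 : ∑ k, ∑ l, x k * A k l * y l = (inner ℝ x' (Matrix.toEuclideanCLM (𝕜 := ℝ) A y') : ℝ) := by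
    show _ = inner ℝ x' (Matrix.toEuclideanCLM (𝕜 := ℝ) A ((WithLp.equiv 2 _).symm y))
    rw [WithLp.equiv_symm_apply, Matrix.toEuclideanCLM_toLp, PiLp.inner_apply]
    simp only [RCLike.inner_apply, conj_trivial, PiLp.toLp_apply, x']
    simp [Matrix.mulVec, dotProduct, Finset.mul_sum, mul_assoc]
    refine Finset.sum_congr rfl fun i _ => ?_
    rw [Finset.sum_mul]
    exact Finset.sum_congr rfl fun j _ => by ring
  have h2 : ‖x'‖ = Real.sqrt (∑ k, x k ^ 2) := by
    rw [EuclideanSpace.norm_eq]; simp [x', sq_abs]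
  have h3 : ‖y'‖ = Real.sqrt (∑ k, y k ^ 2) := by
    rw [EuclideanSpace.norm_eq]; simp [y', sq_abs]
  rw [h1, ← h2, ← h3]
  calc |(inner ℝ x' (Matrix.toEuclideanCLM (𝕜 := ℝ) A y') : ℝ)|
      ≤ ‖x'‖ * ‖Matrix.toEuclideanCLM (𝕜 := ℝ) A y'‖ := abs_real_inner_le_norm _ _
    _ ≤ ‖x'‖ * (‖Matrix.toEuclideanCLM (𝕜 := ℝ) A‖ * ‖y'‖) := by
        gcongr; exact ContinuousLinearMap.le_opNorm _ _
    _ = _ := by ring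

/-- Transfer of the compatibility condition from a bilinear form Sig to a
perturbed bilinear form SigT whose blocks are close in operator norm. -/
theorem stmt_14 (p m : ℕ) (S : Finset (Fin (p + 1)))
    (Sig SigT : Fin (p + 1) → Fin (p + 1) → Matrix (Fin m) (Fin m) ℝ)
    (ν ξ lam η : ℝ) (hν : 0 < ν) (hξ : 1 < ξ) (hlam : 0 ≤ lam)
    (hη0 : 0 < η) (hη1 : η < 1)
    (Q : (Fin (p + 1) → Fin (p + 1) → Matrix (Fin m) (Fin m) ℝ) →
      (Fin (p + 1) → Fin m → ℝ) → ℝ)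
    (hQ : ∀ A b, Q A b = ∑ j₁, ∑ j₂, ∑ k, ∑ l, b j₁ k * A j₁ j₂ k l * b j₂ l)
    (hsymm : ∀ j₁ j₂, (Sig j₁ j₂).transpose = Sig j₂ j₁)
    (hsymm' : ∀ j₁ j₂, (SigT j₁ j₂).transpose = SigT j₂ j₁)
    (hpsd : ∀ b, 0 ≤ Q Sig b) (hpsd' : ∀ b, 0 ≤ Q SigT b)
    (hcompat : ∀ b : Fin (p + 1) → Fin m → ℝ,
      (∑ j ∈ Finset.univ \ S, Real.sqrt (∑ k, b j k ^ 2) ≤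
        ξ * ∑ j ∈ S, Real.sqrt (∑ k, b j k ^ 2)) →
      ν ^ 2 * (∑ j ∈ S, Real.sqrt (∑ k, b j k ^ 2)) ^ 2 ≤ (S.card : ℝ) * Q Sig b)
    (hop : ∀ j₁ j₂,
      ‖Matrix.toEuclideanCLM (𝕜 := ℝ) (SigT j₁ j₂ - Sig j₁ j₂)‖ ≤ lam)
    (hcond : (1 + ξ) ^ 2 * ν⁻¹ ^ 2 * (S.card : ℝ) * lam ≤ η) :
    ∀ b : Fin (p + 1) → Fin m → ℝ,
      (∑ j ∈ Finset.univ \ S, Real.sqrt (∑ k, b j k ^ 2) ≤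
        ξ * ∑ j ∈ S, Real.sqrt (∑ k, b j k ^ 2)) →
      (1 - η) * ν ^ 2 * (∑ j ∈ S, Real.sqrt (∑ k, b j k ^ 2)) ^ 2 ≤
        (S.card : ℝ) * Q SigT b := by
  intro b hb
  set n : Fin (p + 1) → ℝ := fun j => Real.sqrt (∑ k, b j k ^ 2) with hn_def
  have hn : ∀ j, 0 ≤ n j := fun j => Real.sqrt_nonneg _
  set s : ℝ := ∑ j ∈ S, n j with hs_def
  have hs0 : 0 ≤ s := Finset.sum_nonneg fun j _ => hn j
  -- total sum bound
  have htot : ∑ j, n j ≤ (1 + ξ) * s := by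
    have hsplit : (∑ j ∈ Finset.univ \ S, n j) + ∑ j ∈ S, n j = ∑ j, n j :=
      Finset.sum_sdiff (Finset.subset_univ S)
    have := hb
    linarith [hsplit, hb]
  have htot0 : (0:ℝ) ≤ ∑ j, n j := Finset.sum_nonneg fun j _ => hn j
  -- difference bound
  have e : Q SigT b - Q Sig b
      = ∑ j₁, ∑ j₂, ∑ k, ∑ l, b j₁ k * (SigT j₁ j₂ - Sig j₁ j₂) k l * b j₂ l := by
    rw [hQ, hQ]
    simp only [Matrix.sub_apply, mul_sub, sub_mul, Finset.sum_sub_distrib]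
  have hdiff : |Q SigT b - Q Sig b| ≤ lam * (∑ j, n j) ^ 2 := by
    rw [e]
    have hrhs : lam * (∑ j, n j) ^ 2 = ∑ j₁, ∑ j₂, lam * (n j₁ * n j₂) := by
      rw [sq, Finset.sum_mul_sum]
      simp [Finset.mul_sum]
    rw [hrhs]
    refine le_trans (Finset.abs_sum_le_sum_abs _ _) (Finset.sum_le_sum fun j₁ _ => ?_)
    refine le_trans (Finset.abs_sum_le_sum_abs _ _) (Finset.sum_le_sum fun j₂ _ => ?_)
    calc |∑ k, ∑ l, b j₁ k * (SigT j₁ j₂ - Sig j₁ j₂) k l * b j₂ l|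
        ≤ ‖Matrix.toEuclideanCLM (𝕜 := ℝ) (SigT j₁ j₂ - Sig j₁ j₂)‖ * n j₁ * n j₂ :=
          quad_bound_aux m _ _ _
      _ ≤ lam * (n j₁ * n j₂) := by
          rw [mul_assoc]
          exact mul_le_mul_of_nonneg_right (hop j₁ j₂) (by positivity)
  have h1 : ν ^ 2 * s ^ 2 ≤ (S.card : ℝ) * Q Sig b := hcompat b hb
  have hc0 : (0:ℝ) ≤ (S.card : ℝ) := Nat.cast_nonneg _
  have h2 : Q Sig b - Q SigT b ≤ lam * ((1 + ξ) * s) ^ 2 := by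
    have hle : lam * (∑ j, n j) ^ 2 ≤ lam * ((1 + ξ) * s) ^ 2 := by
      apply mul_le_mul_of_nonneg_left _ hlam
      exact pow_le_pow_left₀ htot0 htot 2
    have := neg_abs_le (Q SigT b - Q Sig b)
    linarith [hdiff]
  have hνne : ν ≠ 0 := hν.ne'
  have h3 : (1 + ξ) ^ 2 * (S.card : ℝ) * lam ≤ η * ν ^ 2 := by
    have h := mul_le_mul_of_nonneg_right hcond (sq_nonneg ν)
    have heq : (1 + ξ) ^ 2 * ν⁻¹ ^ 2 * (S.card : ℝ) * lam * ν ^ 2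
        = (1 + ξ) ^ 2 * (S.card : ℝ) * lam := by
      field_simp
    linarith [h, heq.symm.le, heq.le]
  have h4 : (S.card : ℝ) * (Q Sig b - Q SigT b) ≤ (S.card : ℝ) * (lam * ((1 + ξ) * s) ^ 2) :=
    mul_le_mul_of_nonneg_left h2 hc0
  have h5 : (1 + ξ) ^ 2 * (S.card : ℝ) * lam * s ^ 2 ≤ η * ν ^ 2 * s ^ 2 :=
    mul_le_mul_of_nonneg_right h3 (sq_nonneg s)
  have hgoal : (1 - η) * ν ^ 2 * s ^ 2 ≤ (S.card : ℝ) * Q SigT b := by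
    nlinarith [h1, h4, h5]
  exact hgoal
end

section
/- Let ℓ(γ) be a differentiable function of (p+1)×K matrices γ with columns γ_k such that Σ_{k=0}^{K-1} ∂ℓ(γ)/∂γ_k = 0 for every γ. Let γ̂ be a minimizer of ℓ(γ) + λ Σ_{j=1}^p ‖γ_{j·}‖₂ with λ > 0, where γ_{j·} = (γ_{j0}, …, γ_{j,K-1})ᵀ. Then Σ_{k=0}^{K-1} γ̂_{jk} = 0 for every j = 1, …, p. -/
/-- Sum-to-zero relationship for group-Lasso penalized estimates: if the
columnwise partial derivatives of the loss always sum to zero, then each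
penalized row of a minimizer sums to zero. -/
theorem stmt_18 (p K : ℕ)
    (ℓ : (Fin (p + 1) → Fin K → ℝ) → ℝ)
    (hdiff : Differentiable ℝ ℓ)
    (hsum : ∀ (γ : (Fin (p + 1) → Fin K → ℝ)) (j : Fin (p + 1)),
      ∑ k, fderiv ℝ ℓ γ (Pi.single j (Pi.single k 1)) = 0)
    (lam : ℝ) (hlam : 0 < lam)
    (γhat : (Fin (p + 1) → Fin K → ℝ))
    (hmin : ∀ γ : (Fin (p + 1) → Fin K → ℝ),
      ℓ γhat + lam * ∑ j ∈ Finset.univ.erase 0, Real.sqrt (∑ k, γhat j k ^ 2) ≤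
        ℓ γ + lam * ∑ j ∈ Finset.univ.erase 0, Real.sqrt (∑ k, γ j k ^ 2)) :
    ∀ j : Fin (p + 1), j ≠ 0 → ∑ k, γhat j k = 0 := by
  intro j hj
  by_cases hS : ∑ k, γhat j k ^ 2 = 0
  · have hz : ∀ k, γhat j k = 0 := by
      intro k
      have := (Finset.sum_eq_zero_iff_of_nonneg
        (fun i _ => sq_nonneg (γhat j i))).mp hS k (Finset.mem_univ k)
      exact pow_eq_zero_iff (two_ne_zero) |>.mp this
    simp [hz]
  · have hSpos : 0 < ∑ k, γhat j k ^ 2 :=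
      lt_of_le_of_ne (Finset.sum_nonneg fun i _ => sq_nonneg (γhat j i)) (Ne.symm hS)
    set d : Fin (p + 1) → Fin K → ℝ := Pi.single j (fun _ => 1) with hd
    have hdapp : ∀ j' k', d j' k' = if j' = j then 1 else 0 := by
      intro j' k'
      by_cases h : j' = j <;> simp [hd, Pi.single_apply, h]
    -- the path
    set γt : ℝ → (Fin (p + 1) → Fin K → ℝ) := fun t => γhat + t • d with hγt
    have hγtapp : ∀ t j' k', γt t j' k' = γhat j' k' + t * d j' k' := by
      intro t j' k'; simp [hγt]
    -- g : objective along the path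
    set g : ℝ → ℝ := fun t =>
      ℓ (γt t) + lam * ∑ j' ∈ Finset.univ.erase 0,
        Real.sqrt (∑ k, (γt t j' k) ^ 2) with hg
    have hmin0 : ∀ t, g 0 ≤ g t := by
      intro t
      have := hmin (γt t)
      simpa [hg, hγt] using this
    -- derivative of the loss part
    have hpath : HasDerivAt γt d 0 := by
      have h1 : HasDerivAt (fun t : ℝ => t • d) ((1:ℝ) • d) 0 :=
        (hasDerivAt_id (0:ℝ)).smul_const d
      simpa [hγt] using h1.const_add γhat
    have hloss : HasDerivAt (fun t => ℓ (γt t)) (fderiv ℝ ℓ (γt 0) d) 0 :=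
      (hdiff (γt 0)).hasFDerivAt.comp_hasDerivAt 0 hpath
    have hγt0 : γt 0 = γhat := by simp [hγt]
    have hfd0 : fderiv ℝ ℓ γhat d = 0 := by
      have hd_eq : d = ∑ k, Pi.single j (Pi.single k (1:ℝ)) := by
        funext j' k'
        by_cases h : j' = j <;>
          simp [hdapp, h, Finset.sum_apply, Pi.single_apply, Finset.sum_ite_eq']
      rw [hd_eq, map_sum]
      exact hsum γhat j
    -- derivative of each penalty term
    have hpen : ∀ j' ∈ Finset.univ.erase (0 : Fin (p+1)),
        HasDerivAt (fun t => Real.sqrt (∑ k, (γt t j' k) ^ 2))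
          (if j' = j then (∑ k, 2 * γhat j k) / (2 * Real.sqrt (∑ k, γhat j k ^ 2)) else 0) 0 := by
      intro j' _
      by_cases h : j' = j
      · subst h
        have hq : HasDerivAt (fun t => ∑ k, (γt t j' k) ^ 2) (∑ k, 2 * γhat j' k) 0 := by
          have : ∀ k : Fin K, HasDerivAt (fun t => (γt t j' k) ^ 2) (2 * γhat j' k) 0 := by
            intro k
            have h1 : HasDerivAt (fun t : ℝ => γhat j' k + t * 1) (1:ℝ) 0 := by
              simpa using ((hasDerivAt_id (0:ℝ)).mul_const (1:ℝ)).const_add (γhat j' k)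
            have h2 := h1.pow 2
            simp only [hγtapp, hdapp, if_pos rfl]
            refine h2.congr_deriv ?_
            ring
          exact HasDerivAt.fun_sum fun k _ => this k
        have hS0 : (∑ k, (γt 0 j' k) ^ 2) ≠ 0 := by
          rw [hγt0]; exact ne_of_gt hSpos
        have hcomp := (Real.hasDerivAt_sqrt hS0).comp (0:ℝ) hq
        rw [if_pos rfl]
        refine hcomp.congr_deriv ?_
        rw [hγt0]
        field_simp
      · have hconst : (fun t => Real.sqrt (∑ k, (γt t j' k) ^ 2)) =
            fun _ => Real.sqrt (∑ k, (γhat j' k) ^ 2) := by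
          funext t; simp [hγtapp, hdapp, h]
        rw [if_neg h, hconst]
        exact hasDerivAt_const _ _
    have hpensum : HasDerivAt (fun t => ∑ j' ∈ Finset.univ.erase 0,
        Real.sqrt (∑ k, (γt t j' k) ^ 2))
        (∑ j' ∈ Finset.univ.erase (0 : Fin (p+1)),
          if j' = j then (∑ k, 2 * γhat j k) / (2 * Real.sqrt (∑ k, γhat j k ^ 2)) else 0) 0 :=
      HasDerivAt.fun_sum hpen
    have hjj : j ∈ Finset.univ.erase (0 : Fin (p+1)) := Finset.mem_erase.mpr ⟨hj, Finset.mem_univ j⟩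
    have hpsval : (∑ j' ∈ Finset.univ.erase (0 : Fin (p+1)),
          if j' = j then (∑ k, 2 * γhat j k) / (2 * Real.sqrt (∑ k, γhat j k ^ 2)) else 0)
        = (∑ k, 2 * γhat j k) / (2 * Real.sqrt (∑ k, γhat j k ^ 2)) := by
      rw [Finset.sum_ite_eq' _ j, if_pos hjj]
    set D : ℝ := (∑ k, 2 * γhat j k) / (2 * Real.sqrt (∑ k, γhat j k ^ 2)) with hD
    have hgderiv : HasDerivAt g (fderiv ℝ ℓ γhat d + lam * D) 0 := by
      have h1 := hloss.add ((hpensum.const_mul lam))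
      rw [hγt0, hpsval] at h1
      exact h1
    have hlocmin : IsLocalMin g 0 := by
      apply IsMinOn.isLocalMin _ (Filter.univ_mem)
      intro t _
      exact hmin0 t
    have hD0 : fderiv ℝ ℓ γhat d + lam * D = 0 := by
      have := hlocmin.hasDerivAt_eq_zero hgderiv
      exact this
    rw [hfd0] at hD0
    simp only [ContinuousLinearMap.zero_apply, zero_add] at hD0
    have hDzero : D = 0 := by
      rcases mul_eq_zero.mp hD0 with h | h
      · exact absurd h (ne_of_gt hlam)
      · exact h
    have hsqrt : Real.sqrt (∑ k, γhat j k ^ 2) ≠ 0 :=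
      ne_of_gt (Real.sqrt_pos.mpr hSpos)
    have : (∑ k, 2 * γhat j k) = 0 := by
      rw [hD] at hDzero
      field_simp at hDzero
      simpa using hDzero
    have h2 : (2:ℝ) * ∑ k, γhat j k = 0 := by
      rw [Finset.mul_sum]; simpa using this
    linarith
end

section
/- Let π, π' ∈ (0,1) and define K(π, π') = π'/π - 1 - log(π'/π) and the KL divergence L over a K-category distribution. For a single observation with indicator R^{(t)} and probabilities π(t), π'(t) for category t, the pointwise Bregman divergence of the calibration loss between linear predictors h and h' satisfies: if π(k,x) = e^{h_k(x)}/Σ_s e^{h_s(x)} and π'(k,x) = e^{h'_k(x)}/Σ_s e^{h'_s(x)}, then Σ_{k≠t}[e^{h_k - h_t} - e^{h'_k - h'_t} - e^{h'_k - h'_t}((h_k - h_t) - (h'_k - h'_t))] = (1/π'(t,x))·[K(π(t,x), π'(t,x)) + L(π(x), π'(x))], where L(π, π') = Σ_k π'(k) log(π'(k)/π(k)). -/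
/-- Pointwise identity relating the calibration-loss Bregman divergence to
K(π t, π' t) plus the Kullback–Leibler divergence, scaled by 1/π'(t). -/
theorem stmt_19 (K : ℕ) (h h' : Fin K → ℝ) (t : Fin K) :
    letI π : Fin K → ℝ := fun k => Real.exp (h k) / ∑ s, Real.exp (h s)
    letI π' : Fin K → ℝ := fun k => Real.exp (h' k) / ∑ s, Real.exp (h' s)
    ∑ k ∈ Finset.univ.erase t,
        (Real.exp (h k - h t) - Real.exp (h' k - h' t) -
          Real.exp (h' k - h' t) * ((h k - h t) - (h' k - h' t))) =
      (1 / π' t) *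
        ((π' t / π t - 1 - Real.log (π' t / π t)) +
          ∑ k, π' k * Real.log (π' k / π k)) := by
  dsimp only
  set A := ∑ s, Real.exp (h s) with hA
  set B := ∑ s, Real.exp (h' s) with hB
  have hApos : 0 < A := Finset.sum_pos (fun i _ => Real.exp_pos _) ⟨t, Finset.mem_univ t⟩
  have hBpos : 0 < B := Finset.sum_pos (fun i _ => Real.exp_pos _) ⟨t, Finset.mem_univ t⟩
  have hlog : ∀ k : Fin K,
      Real.log (Real.exp (h' k) / B / (Real.exp (h k) / A)) =
        (h' k - Real.log B) - (h k - Real.log A) := by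
    intro k
    rw [Real.log_div (by positivity) (by positivity),
      Real.log_div (by positivity) (by positivity),
      Real.log_div (by positivity) (by positivity),
      Real.log_exp, Real.log_exp]
  simp only [hlog]
  set C := ∑ k, Real.exp (h' k) * (h' k - h k) with hC
  -- RHS inner sum
  have hsum2 : ∑ k, Real.exp (h' k) / B * ((h' k - Real.log B) - (h k - Real.log A)) =
      C / B + (Real.log A - Real.log B) := by
    have e1 : ∀ k : Fin K,
        Real.exp (h' k) / B * ((h' k - Real.log B) - (h k - Real.log A)) =
          Real.exp (h' k) * (h' k - h k) / B +
            Real.exp (h' k) / B * (Real.log A - Real.log B) := fun k => by ring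
    simp only [e1, Finset.sum_add_distrib, ← Finset.sum_div, ← Finset.sum_mul, ← hB, ← hC]
    rw [div_self hBpos.ne']
    ring
  rw [hsum2]
  -- LHS: extend the erased sum to the whole sum
  have hzero : Real.exp (h t - h t) - Real.exp (h' t - h' t) -
      Real.exp (h' t - h' t) * ((h t - h t) - (h' t - h' t)) = 0 := by
    simp
  rw [Finset.sum_erase_eq_sub (Finset.mem_univ t), hzero, sub_zero]
  have e2 : ∀ k : Fin K,
      Real.exp (h k - h t) - Real.exp (h' k - h' t) -
        Real.exp (h' k - h' t) * ((h k - h t) - (h' k - h' t)) =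
      Real.exp (h k) / Real.exp (h t) - Real.exp (h' k) / Real.exp (h' t) -
        Real.exp (h' k) * ((h k - h t) - (h' k - h' t)) / Real.exp (h' t) := by
    intro k
    rw [Real.exp_sub, Real.exp_sub]
    ring
  simp only [e2, Finset.sum_sub_distrib, ← Finset.sum_div, ← hA, ← hB]
  have hsum1 : ∑ k, Real.exp (h' k) * ((h k - h t) - (h' k - h' t)) =
      -C + (h' t - h t) * B := by
    have e3 : ∀ k : Fin K,
        Real.exp (h' k) * ((h k - h t) - (h' k - h' t)) =
          -(Real.exp (h' k) * (h' k - h k)) + Real.exp (h' k) * (h' t - h t) := fun k => by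
      ring
    simp only [e3, Finset.sum_add_distrib, Finset.sum_neg_distrib, ← Finset.sum_mul, ← hB, ← hC]
    ring
  rw [hsum1]
  have h1 : Real.exp (h t) ≠ 0 := (Real.exp_pos _).ne'
  have h2 : Real.exp (h' t) ≠ 0 := (Real.exp_pos _).ne'
  field_simp
  ring
end
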